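/- Let C be a compact convex body in ℝ², centrally symmetric with center p. Then C cannot be partitioned into two subsets of strictly smaller diameter if and only if every boundary point of C is an endpoint of a diameter segment, i.e., for every x ∈ ∂C there exists y ∈ C with dist(x, y) = diam(C). -/

import Mathlib

open Metric Set RealInnerProductSpace

local notation "E2" => EuclideanSpace ℝ (Fin 2)

lemma aux_diam_attained {X : Type*} [MetricSpace X] {s : Set X} (hs : IsCompact s)
    (hne : s.Nonempty) : ∃ x ∈ s, ∃ y ∈ s, dist x y = Metric.diam s := by
  obtain ⟨⟨x, y⟩, hxy, hmax⟩ := (hs.prod hs).exists_isMaxOn (hne.prod hne)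
    ((continuous_dist.comp (continuous_fst.prodMk continuous_snd)).continuousOn :
      ContinuousOn (fun q : X × X => dist q.1 q.2) (s ×ˢ s))
  refine ⟨x, hxy.1, y, hxy.2, le_antisymm (Metric.dist_le_diam_of_mem hs.isBounded hxy.1 hxy.2) ?_⟩
  exact Metric.diam_le_of_forall_dist_le dist_nonneg fun a ha b hb =>
    hmax (Set.mk_mem_prod ha hb)

lemma aux_half_lt (C : Set E2) (p x w : E2)
    (hC : IsCompact C) (hconv : Convex ℝ C)
    (hsym : ∀ z ∈ C, (2:ℝ) • p - z ∈ C)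
    (hpC : p ∈ interior C) (hxf : x ∈ frontier C)
    (hD0 : 0 < Metric.diam C)
    (hdp : ∀ z ∈ C, dist z p ≤ Metric.diam C / 2)
    (hlt : dist x p < Metric.diam C / 2)
    (hcol : ∀ z : E2, ⟪w, z⟫ = 0 → ∃ t : ℝ, z = t • (x - p)) :
    Metric.diam {z ∈ C | 0 ≤ ⟪w, z - p⟫} < Metric.diam C := by
  set D := Metric.diam C with hD
  set S := {z ∈ C | 0 ≤ ⟪w, z - p⟫} with hS
  have hScl : IsClosed {z : E2 | 0 ≤ ⟪w, z - p⟫} :=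
    isClosed_le continuous_const ((continuous_const.inner (continuous_id.sub continuous_const)))
  have hScomp : IsCompact S := hC.inter_right hScl
  rcases S.eq_empty_or_nonempty with hSe | hSne
  · rw [hSe]; simpa using hD0
  have hle : Metric.diam S ≤ D := Metric.diam_mono (Set.sep_subset _ _) hC.isBounded
  rcases lt_or_eq_of_le hle with h | h
  · exact h
  exfalso
  obtain ⟨u, hu, v, hv, huv⟩ := aux_diam_attained hScomp hSne
  rw [h] at huv
  have huC : u ∈ C := hu.1
  have hvC : v ∈ C := hv.1
  have h1 : dist u p ≤ D / 2 := hdp u huC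
  have h2 : dist v p ≤ D / 2 := hdp v hvC
  have htri : dist u v ≤ dist u p + dist p v := dist_triangle u p v
  have h2' : dist p v ≤ D / 2 := by rw [dist_comm]; exact h2
  have hup : dist u p = D / 2 := by linarith
  have hpv : dist p v = D / 2 := by linarith
  have heq : u - p = p - v := by
    apply eq_of_norm_eq_of_norm_add_eq
    · rw [← dist_eq_norm, ← dist_eq_norm, hup, hpv]
    · have : u - p + (p - v) = u - v := by abel
      rw [this, ← dist_eq_norm, ← dist_eq_norm, ← dist_eq_norm, huv, hup, hpv]; ring
  have hiu : (0:ℝ) ≤ ⟪w, u - p⟫ := hu.2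
  have hiv : (0:ℝ) ≤ ⟪w, v - p⟫ := hv.2
  have hvp : v - p = -(u - p) := by rw [heq]; abel
  have hzero : ⟪w, u - p⟫ = 0 := by
    have hneg : ⟪w, v - p⟫ = -⟪w, u - p⟫ := by rw [hvp, inner_neg_right]
    linarith
  obtain ⟨t, ht⟩ := hcol (u - p) hzero
  have hnu : ‖u - p‖ = D / 2 := by rw [← dist_eq_norm, hup]
  have hrlt : ‖x - p‖ < D / 2 := by rw [← dist_eq_norm]; exact hlt
  have habs : |t| * ‖x - p‖ = D / 2 := by
    rw [← Real.norm_eq_abs, ← norm_smul, ← ht, hnu]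
  have ht1 : 1 < |t| := by
    nlinarith [norm_nonneg (x - p), abs_nonneg t]
  set s := |t| with hs
  have hs1 : 1 < s := ht1
  have hs0 : 0 < s := lt_trans one_pos hs1
  obtain ⟨q, hqC, hq⟩ : ∃ q ∈ C, q - p = s • (x - p) := by
    rcases le_or_gt 0 t with htpos | htneg
    · exact ⟨u, huC, by rw [ht, hs, abs_of_nonneg htpos]⟩
    · refine ⟨(2:ℝ) • p - u, hsym u huC, ?_⟩
      rw [hs, abs_of_neg htneg, neg_smul, ← ht]
      module
  have hx_int : x ∈ interior C := by
    have hq' : q = p + s • (x - p) := by rw [← hq]; abel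
    have hx_eq : x = (1 - 1/s) • p + (1/s) • q := by
      rw [hq']
      match_scalars <;> (field_simp; try ring)
    rw [hx_eq]
    refine hconv.combo_interior_self_mem_interior hpC hqC ?_ (by positivity) (by ring)
    have : 1/s < 1 := (div_lt_one hs0).2 hs1
    linarith
  exact hxf.2 hx_int

/-- A preconnected set meeting a closed set and its complement meets the frontier. -/
lemma aux_frontier_meet {X : Type*} [TopologicalSpace X] {s t : Set X}
    (hs : IsPreconnected s) (ht : IsClosed t) (h1 : (s ∩ t).Nonempty)
    (h2 : (s \ t).Nonempty) : (s ∩ frontier t).Nonempty := by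
  by_contra h
  rw [Set.not_nonempty_iff_eq_empty] at h
  have hsub : s ⊆ interior t ∪ tᶜ := by
    intro x hx
    by_cases hxt : x ∈ t
    · left
      have hxcl : x ∈ closure t := subset_closure hxt
      have : x ∉ frontier t := fun hf => (Set.eq_empty_iff_forall_notMem.1 h x) ⟨hx, hf⟩
      rw [frontier, Set.mem_diff] at this
      push_neg at this
      exact this hxcl
    · right; exact hxt
  obtain ⟨z, hz⟩ := hs (interior t) tᶜ isOpen_interior ht.isOpen_compl hsub
    (by obtain ⟨a, ha, hat⟩ := h1
        refine ⟨a, ha, ?_⟩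
        have : a ∉ frontier t := fun hf => (Set.eq_empty_iff_forall_notMem.1 h a) ⟨ha, hf⟩
        rw [frontier, Set.mem_diff] at this
        push_neg at this
        exact this (subset_closure hat))
    (by obtain ⟨b, hb, hbt⟩ := h2; exact ⟨b, hb, hbt⟩)
  exact hz.2.2 (interior_subset hz.2.1)

theorem no_partition_iff_all_boundary_endpoints
    (C : Set (EuclideanSpace ℝ (Fin 2))) (p : EuclideanSpace ℝ (Fin 2))
    (hC : IsCompact C) (hconv : Convex ℝ C) (hint : (interior C).Nonempty)
    (hsym : ∀ x ∈ C, (2 : ℝ) • p - x ∈ C) :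
    (¬ ∃ C₁ C₂ : Set (EuclideanSpace ℝ (Fin 2)), C = C₁ ∪ C₂ ∧
        Metric.diam C₁ < Metric.diam C ∧ Metric.diam C₂ < Metric.diam C) ↔
      (∀ x ∈ frontier C, ∃ y ∈ C, dist x y = Metric.diam C) := by
  set D := Metric.diam C with hDdef
  obtain ⟨a, ha⟩ := hint
  have hpC : p ∈ interior C := by
    have h2a : (2:ℝ) • p - a ∈ C := hsym a (interior_subset ha)
    have hpe : p = (1/2 : ℝ) • a + (1/2 : ℝ) • ((2:ℝ) • p - a) := by module
    rw [hpe]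
    exact hconv.combo_interior_self_mem_interior ha h2a (by norm_num) (by norm_num) (by norm_num)
  have hdist2 : ∀ z : EuclideanSpace ℝ (Fin 2), dist z ((2:ℝ) • p - z) = 2 * dist z p := by
    intro z
    rw [dist_eq_norm, dist_eq_norm]
    have : z - ((2:ℝ) • p - z) = (2:ℝ) • (z - p) := by module
    rw [this, norm_smul]
    simp [Real.norm_eq_abs, abs_of_nonneg]
  have hD0 : 0 < D := by
    obtain ⟨ε, hε, hball⟩ := Metric.isOpen_iff.1 isOpen_interior p hpC
    set e : EuclideanSpace ℝ (Fin 2) := EuclideanSpace.single (0 : Fin 2) (1:ℝ) with he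
    have hqm : p + (ε/2) • e ∈ C := by
      apply interior_subset; apply hball
      rw [Metric.mem_ball, dist_eq_norm]
      have : p + (ε/2) • e - p = (ε/2) • e := by abel
      rw [this, norm_smul, he, EuclideanSpace.norm_single]
      simp [Real.norm_eq_abs, abs_of_pos hε]
      linarith
    have hd : dist p (p + (ε/2) • e) = ε/2 := by
      rw [dist_eq_norm]
      have : p - (p + (ε/2) • e) = -((ε/2) • e) := by abel
      rw [this, norm_neg, norm_smul, he, EuclideanSpace.norm_single]
      simp [Real.norm_eq_abs, abs_of_pos hε]
    have := Metric.dist_le_diam_of_mem hC.isBounded (interior_subset hpC) hqm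
    rw [hd] at this
    linarith
  have hdp : ∀ z ∈ C, dist z p ≤ D / 2 := by
    intro z hz
    have := Metric.dist_le_diam_of_mem hC.isBounded hz (hsym z hz)
    rw [hdist2 z] at this
    linarith
  have claimA : ∀ z ∈ C, ((∃ y ∈ C, dist z y = D) ↔ dist z p = D / 2) := by
    intro z hz
    constructor
    · rintro ⟨y, hy, hzy⟩
      have h1 := hdp z hz
      have h2 := hdp y hy
      have htri := dist_triangle z p y
      rw [dist_comm p y] at htri
      linarith
    · intro hzp
      exact ⟨(2:ℝ) • p - z, hsym z hz, by rw [hdist2 z, hzp]; ring⟩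
  constructor
  · -- no partition → all boundary endpoints
    intro hno x hxf
    by_contra hnp
    apply hno
    have hxC : x ∈ C := hC.isClosed.frontier_subset hxf
    have hlt : dist x p < D / 2 :=
      lt_of_le_of_ne (hdp x hxC) (fun h => hnp ((claimA x hxC).2 h))
    -- x ≠ p since x ∈ frontier and p ∈ interior
    have hxp : x - p ≠ 0 := by
      intro h
      rw [sub_eq_zero] at h
      exact hxf.2 (h ▸ hpC)
    set v : EuclideanSpace ℝ (Fin 2) := x - p with hv
    set w : EuclideanSpace ℝ (Fin 2) :=
      EuclideanSpace.single (0 : Fin 2) (-(v 1)) + EuclideanSpace.single (1 : Fin 2) (v 0) with hw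
    have hinner : ∀ z : EuclideanSpace ℝ (Fin 2), ⟪w, z⟫ = -(v 1) * z 0 + v 0 * z 1 := by
      intro z
      rw [hw, inner_add_left, EuclideanSpace.inner_single_left, EuclideanSpace.inner_single_left]
      simp
    have hcol : ∀ z : EuclideanSpace ℝ (Fin 2), ⟪w, z⟫ = 0 → ∃ t : ℝ, z = t • v := by
      intro z hz
      rw [hinner] at hz
      have hcross : v 0 * z 1 = v 1 * z 0 := by linarith
      have hv01 : v 0 ≠ 0 ∨ v 1 ≠ 0 := by
        by_contra hcon
        push_neg at hcon
        apply hxp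
        ext i
        fin_cases i
        · exact hcon.1
        · exact hcon.2
      rcases hv01 with h0 | h1
      · refine ⟨z 0 / v 0, ?_⟩
        ext i
        fin_cases i <;> simp [PiLp.smul_apply, smul_eq_mul]
        · field_simp
        · field_simp
          linarith [hcross]
      · refine ⟨z 1 / v 1, ?_⟩
        ext i
        fin_cases i <;> simp [PiLp.smul_apply, smul_eq_mul]
        · field_simp
          linarith [hcross]
        · field_simp
    have hcol' : ∀ z : EuclideanSpace ℝ (Fin 2), ⟪-w, z⟫ = 0 → ∃ t : ℝ, z = t • v := by
      intro z hz
      rw [inner_neg_left, neg_eq_zero] at hz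
      exact hcol z hz
    refine ⟨{z ∈ C | 0 ≤ ⟪w, z - p⟫}, {z ∈ C | 0 ≤ ⟪-w, z - p⟫}, ?_, ?_, ?_⟩
    · ext z
      constructor
      · intro hz
        rcases le_total 0 (⟪w, z - p⟫ : ℝ) with h | h
        · exact Or.inl ⟨hz, h⟩
        · exact Or.inr ⟨hz, by rw [inner_neg_left]; linarith⟩
      · rintro (hz | hz) <;> exact hz.1
    · exact aux_half_lt C p x w hC hconv hsym hpC hxf hD0 hdp hlt hcol
    · exact aux_half_lt C p x (-w) hC hconv hsym hpC hxf hD0 hdp hlt hcol'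
  · -- all boundary endpoints → no partition
    intro hall
    rintro ⟨C₁, C₂, hun, h1, h2⟩
    have hfs : frontier C ⊆ Metric.sphere p (D/2) := by
      intro z hz
      have hzC : z ∈ C := hC.isClosed.frontier_subset hz
      exact Metric.mem_sphere.2 ((claimA z hzC).1 (hall z hz))
    have hsub : Metric.sphere p (D/2) ⊆ C := by
      intro z hz
      by_contra hzC
      have hseg : IsPreconnected (segment ℝ p z) := (convex_segment p z).isPreconnected
      obtain ⟨y, hyseg, hyf⟩ := aux_frontier_meet hseg hC.isClosed
        ⟨p, left_mem_segment ℝ p z, interior_subset hpC⟩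
        ⟨z, right_mem_segment ℝ p z, hzC⟩
      have hyd : dist y p = D/2 := hfs hyf
      obtain ⟨c, b, hc, hb, hcb, hy⟩ := hyseg
      have hzp : dist z p = D/2 := Metric.mem_sphere.1 hz
      have hyb : dist y p = b * (D/2) := by
        rw [dist_eq_norm]
        have : y - p = b • (z - p) := by
          rw [← hy]
          have hc1 : c = 1 - b := by linarith
          rw [hc1]; module
        rw [this, norm_smul, Real.norm_eq_abs, abs_of_nonneg hb, ← dist_eq_norm, hzp]
      have hb1 : b = 1 := by
        rw [hyd] at hyb
        have : (b - 1) * (D/2) = 0 := by linarith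
        rcases mul_eq_zero.1 this with h | h
        · linarith
        · linarith
      have hyz : y = z := by
        rw [← hy]
        have hc0 : c = 0 := by linarith
        rw [hb1, hc0]
        module
      exact hzC (hyz ▸ hC.isClosed.frontier_subset hyf)
    have hrank : 1 < Module.rank ℝ (EuclideanSpace ℝ (Fin 2)) := by
      rw [← Module.finrank_eq_rank, finrank_euclideanSpace_fin]
      exact_mod_cast one_lt_two
    have hcon : IsPreconnected (Metric.sphere p (D/2)) := isPreconnected_sphere hrank p (D/2)
    have hC₁sub : C₁ ⊆ C := hun ▸ Set.subset_union_left
    have hC₂sub : C₂ ⊆ C := hun ▸ Set.subset_union_right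
    have hK1 : Metric.diam (closure C₁) < D := by rwa [Metric.diam_closure]
    have hK2 : Metric.diam (closure C₂) < D := by rwa [Metric.diam_closure]
    have hb1 : Bornology.IsBounded (closure C₁) := (hC.isBounded.subset hC₁sub).closure
    have hb2 : Bornology.IsBounded (closure C₂) := (hC.isBounded.subset hC₂sub).closure
    have hCK : C ⊆ closure C₁ ∪ closure C₂ := by
      rw [hun]; exact Set.union_subset_union subset_closure subset_closure
    have hanti : ∀ z ∈ Metric.sphere p (D/2), ((2:ℝ) • p - z) ∈ Metric.sphere p (D/2) := by
      intro z hz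
      rw [Metric.mem_sphere] at hz ⊢
      rw [dist_eq_norm] at hz ⊢
      have : (2:ℝ) • p - z - p = -(z - p) := by module
      rw [this, norm_neg, hz]
    have hdistD : ∀ z ∈ Metric.sphere p (D/2), dist z ((2:ℝ) • p - z) = D := by
      intro z hz
      rw [hdist2 z, Metric.mem_sphere.1 hz]; ring
    have hnot1 : ∀ z ∈ Metric.sphere p (D/2), z ∈ closure C₁ → ((2:ℝ) • p - z) ∉ closure C₁ := by
      intro z hz hz1 hz1'
      have := Metric.dist_le_diam_of_mem hb1 hz1 hz1'
      rw [hdistD z hz] at this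
      linarith
    have hnot2 : ∀ z ∈ Metric.sphere p (D/2), z ∈ closure C₂ → ((2:ℝ) • p - z) ∉ closure C₂ := by
      intro z hz hz2 hz2'
      have := Metric.dist_le_diam_of_mem hb2 hz2 hz2'
      rw [hdistD z hz] at this
      linarith
    have hcover : Metric.sphere p (D/2) ⊆ (closure C₁)ᶜ ∪ (closure C₂)ᶜ := by
      intro z hz
      by_contra hcon'
      simp only [Set.mem_union, Set.mem_compl_iff, not_or, not_not] at hcon'
      have hz1 := hcon'.1
      have hz2 := hcon'.2
      have hza : ((2:ℝ) • p - z) ∈ C := hsub (hanti z hz)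
      rcases hCK hza with h' | h'
      · exact hnot1 z hz hz1 h'
      · exact hnot2 z hz hz2 h'
    have hsne : (Metric.sphere p (D/2)).Nonempty :=
      NormedSpace.sphere_nonempty.2 (by linarith)
    obtain ⟨z₀, hz₀⟩ := hsne
    have hz₀' := hanti z₀ hz₀
    have hz₀C : z₀ ∈ C := hsub hz₀
    have hz₀'C : ((2:ℝ) • p - z₀) ∈ C := hsub hz₀'
    have hinv : (2:ℝ) • p - ((2:ℝ) • p - z₀) = z₀ := by module
    obtain ⟨hne1, hne2⟩ : (Metric.sphere p (D/2) ∩ (closure C₁)ᶜ).Nonempty ∧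
        (Metric.sphere p (D/2) ∩ (closure C₂)ᶜ).Nonempty := by
      rcases hCK hz₀C with h' | h'
      · have ha1 : ((2:ℝ) • p - z₀) ∉ closure C₁ := hnot1 z₀ hz₀ h'
        have ha2 : ((2:ℝ) • p - z₀) ∈ closure C₂ := (hCK hz₀'C).resolve_left ha1
        have hz₀n2 : z₀ ∉ closure C₂ := by
          have h := hnot2 _ hz₀' ha2
          rwa [hinv] at h
        exact ⟨⟨_, hz₀', ha1⟩, ⟨z₀, hz₀, hz₀n2⟩⟩
      · have ha2 : ((2:ℝ) • p - z₀) ∉ closure C₂ := hnot2 z₀ hz₀ h'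
        have ha1 : ((2:ℝ) • p - z₀) ∈ closure C₁ := (hCK hz₀'C).resolve_right ha2
        have hz₀n1 : z₀ ∉ closure C₁ := by
          have h := hnot1 _ hz₀' ha1
          rwa [hinv] at h
        exact ⟨⟨z₀, hz₀, hz₀n1⟩, ⟨_, hz₀', ha2⟩⟩
    obtain ⟨zz, hzz, hzz1, hzz2⟩ := hcon _ _ (isClosed_closure.isOpen_compl)
      (isClosed_closure.isOpen_compl) hcover hne1 hne2
    rcases hCK (hsub hzz) with h' | h'
    · exact hzz1 h'
    · exact hzz2 h'
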